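/- (Appendix, equation (12a).) For every subcarrier p ∈ {0,…,N−1}, E[ conj(h̄(p)) · H̄^{ICI}_{pp} ] = 1 − τ_av/N. -/

import Mathlib

open Finset MeasureTheory

/-- Frequency-domain channel coefficient `h̄(p) = ∑_{ℓ=0}^{L-1} h(ℓ)·e^{-2πiℓp/N}`. -/
noncomputable def hBar {Ω : Type*} (N L : ℕ) (h : ℕ → Ω → ℂ) (p : ℕ) (ω : Ω) : ℂ :=
  ∑ ℓ ∈ range L, h ℓ ω *
    Complex.exp (-(2 * (Real.pi : ℂ) * Complex.I * (ℓ : ℂ) * (p : ℂ)) / (N : ℂ))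

/-- Frequency-domain ICI matrix entry
`H̄^{ICI}_{pq} = (1/N)·∑_{n=0}^{N-1} ∑_{ℓ=0}^{L-1} h(ℓ)·e^{2πi(nq-ℓq-np)/N}·𝟙[ℓ ≤ n]`. -/
noncomputable def Hici {Ω : Type*} (N L : ℕ) (h : ℕ → Ω → ℂ) (p q : ℕ) (ω : Ω) : ℂ :=
  (1 / (N : ℂ)) * ∑ n ∈ range N, ∑ ℓ ∈ range L,
    h ℓ ω * Complex.exp (2 * (Real.pi : ℂ) * Complex.I *
      ((((n * q : ℕ) : ℤ) - ((ℓ * q : ℕ) : ℤ) - ((n * p : ℕ) : ℤ) : ℤ) : ℂ) / (N : ℂ)) *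
    (if ℓ ≤ n then 1 else 0)

/-- Appendix, equation (12a): `E[conj(h̄(p)) · H̄^{ICI}_{pp}] = 1 - τ_av/N`. -/
theorem stmt1 {Ω : Type*} [MeasurableSpace Ω] (μ : Measure Ω) [IsProbabilityMeasure μ]
    (N L : ℕ) (hL1 : 1 ≤ L) (hLN : L ≤ N)
    (ρ : ℕ → ℝ) (hnn : ∀ ℓ, 0 ≤ ρ ℓ) (hsum : ∑ ℓ ∈ range L, ρ ℓ = 1)
    (h : ℕ → Ω → ℂ)
    (hint : ∀ ℓ ℓ', ℓ < L → ℓ' < L →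
      Integrable (fun ω => h ℓ ω * (starRingEnd ℂ) (h ℓ' ω)) μ)
    (hmean : ∀ ℓ, ℓ < L → ∫ ω, h ℓ ω ∂μ = 0)
    (hcov : ∀ ℓ ℓ', ℓ < L → ℓ' < L →
      ∫ ω, h ℓ ω * (starRingEnd ℂ) (h ℓ' ω) ∂μ = if ℓ = ℓ' then ((ρ ℓ : ℝ) : ℂ) else 0)
    (p : ℕ) (hp : p < N) :
    ∫ ω, (starRingEnd ℂ) (hBar N L h p ω) * Hici N L h p p ω ∂μ
      = 1 - ((∑ ℓ ∈ range L, (ℓ : ℝ) * ρ ℓ : ℝ) : ℂ) / (N : ℂ) := by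
  have hN : (N : ℂ) ≠ 0 := by
    exact_mod_cast Nat.cast_ne_zero.mpr (by omega)
  set C : ℕ → ℕ → ℕ → ℂ := fun n ℓ ℓ' =>
    (1 / (N : ℂ)) *
      ((starRingEnd ℂ)
          (Complex.exp (-(2 * (Real.pi : ℂ) * Complex.I * (ℓ' : ℂ) * (p : ℂ)) / (N : ℂ))) *
        (Complex.exp (2 * (Real.pi : ℂ) * Complex.I *
            ((((n * p : ℕ) : ℤ) - ((ℓ * p : ℕ) : ℤ) - ((n * p : ℕ) : ℤ) : ℤ) : ℂ) / (N : ℂ)) *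
          (if ℓ ≤ n then 1 else 0))) with hC
  have hCd : ∀ n ℓ, ℓ < L → C n ℓ ℓ = (1 / (N : ℂ)) * (if ℓ ≤ n then 1 else 0) := by
    intro n ℓ hℓ
    simp only [hC]
    congr 1
    rw [← Complex.exp_conj, ← mul_one (if ℓ ≤ n then (1:ℂ) else 0), ← mul_assoc,
      ← Complex.exp_add]
    have : (starRingEnd ℂ) (-(2 * (Real.pi : ℂ) * Complex.I * (ℓ : ℂ) * (p : ℂ)) / (N : ℂ)) +
        2 * (Real.pi : ℂ) * Complex.I *
            ((((n * p : ℕ) : ℤ) - ((ℓ * p : ℕ) : ℤ) - ((n * p : ℕ) : ℤ) : ℤ) : ℂ) / (N : ℂ) = 0 := by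
      simp only [map_div₀, map_neg, map_mul, Complex.conj_I, Complex.conj_ofNat,
        Complex.conj_natCast, Complex.conj_ofReal]
      push_cast
      ring
    rw [this, Complex.exp_zero, one_mul]
  have hexp : ∀ ω, (starRingEnd ℂ) (hBar N L h p ω) * Hici N L h p p ω
      = ∑ n ∈ range N, ∑ ℓ ∈ range L, ∑ ℓ' ∈ range L,
          (h ℓ ω * (starRingEnd ℂ) (h ℓ' ω)) * C n ℓ ℓ' := by
    intro ω
    simp only [hBar, Hici, map_sum, map_mul, Finset.mul_sum, Finset.sum_mul, hC]
    refine Finset.sum_congr rfl fun n _ => Finset.sum_congr rfl fun ℓ _ =>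
      Finset.sum_congr rfl fun ℓ' _ => ?_
    ring
  calc ∫ ω, (starRingEnd ℂ) (hBar N L h p ω) * Hici N L h p p ω ∂μ
      = ∑ n ∈ range N, ∑ ℓ ∈ range L, ∑ ℓ' ∈ range L,
          (∫ ω, h ℓ ω * (starRingEnd ℂ) (h ℓ' ω) ∂μ) * C n ℓ ℓ' := by
        simp_rw [hexp]
        rw [integral_finset_sum _ fun n _ => integrable_finset_sum _ fun ℓ hℓ =>
          integrable_finset_sum _ fun ℓ' hℓ' =>
            (hint ℓ ℓ' (mem_range.mp hℓ) (mem_range.mp hℓ')).mul_const _]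
        refine Finset.sum_congr rfl fun n _ => ?_
        rw [integral_finset_sum _ fun ℓ hℓ => integrable_finset_sum _ fun ℓ' hℓ' =>
          (hint ℓ ℓ' (mem_range.mp hℓ) (mem_range.mp hℓ')).mul_const _]
        refine Finset.sum_congr rfl fun ℓ hℓ => ?_
        rw [integral_finset_sum _ fun ℓ' hℓ' =>
          (hint ℓ ℓ' (mem_range.mp hℓ) (mem_range.mp hℓ')).mul_const _]
        exact Finset.sum_congr rfl fun ℓ' _ => integral_mul_const _ _
    _ = ∑ n ∈ range N, ∑ ℓ ∈ range L, ((ρ ℓ : ℂ)) * C n ℓ ℓ := by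
        refine Finset.sum_congr rfl fun n _ => Finset.sum_congr rfl fun ℓ hℓ => ?_
        have hℓL := mem_range.mp hℓ
        rw [Finset.sum_congr rfl fun ℓ' hℓ' => by
          rw [hcov ℓ ℓ' hℓL (mem_range.mp hℓ')]]
        simp_rw [ite_mul, zero_mul]
        rw [Finset.sum_ite_eq (range L) ℓ (fun ℓ' => (ρ ℓ : ℂ) * C n ℓ ℓ'), if_pos hℓ]
    _ = ∑ ℓ ∈ range L, (ρ ℓ : ℂ) * ((N : ℂ) - (ℓ : ℂ)) / (N : ℂ) := by
        rw [Finset.sum_comm]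
        refine Finset.sum_congr rfl fun ℓ hℓ => ?_
        have hℓL := mem_range.mp hℓ
        simp_rw [hCd _ ℓ hℓL]
        rw [← Finset.mul_sum]
        have : ∑ n ∈ range N, (1 / (N : ℂ)) * (if ℓ ≤ n then (1:ℂ) else 0)
            = (1 / (N : ℂ)) * ((N - ℓ : ℕ) : ℂ) := by
          rw [← Finset.mul_sum]
          congr 1
          have hf : (Finset.range N).filter (fun n => ℓ ≤ n) = Finset.Ico ℓ N := by
            ext n; simp [and_comm]
          rw [Finset.sum_boole, hf, Nat.card_Ico]
        rw [this]
        have hℓN : ℓ ≤ N := le_of_lt (lt_of_lt_of_le hℓL hLN)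
        push_cast [hℓN]
        ring
    _ = 1 - ((∑ ℓ ∈ range L, (ℓ : ℝ) * ρ ℓ : ℝ) : ℂ) / (N : ℂ) := by
        rw [← Finset.sum_div]
        rw [show ∑ ℓ ∈ range L, (ρ ℓ : ℂ) * ((N : ℂ) - (ℓ : ℂ))
            = (N : ℂ) * (∑ ℓ ∈ range L, (ρ ℓ : ℂ)) - ∑ ℓ ∈ range L, (ℓ : ℂ) * (ρ ℓ : ℂ) from by
          rw [Finset.mul_sum, ← Finset.sum_sub_distrib]
          exact Finset.sum_congr rfl fun ℓ _ => by ring]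
        have h1 : (∑ ℓ ∈ range L, (ρ ℓ : ℂ)) = 1 := by exact_mod_cast hsum
        have h2 : (∑ ℓ ∈ range L, (ℓ : ℂ) * (ρ ℓ : ℂ))
            = ((∑ ℓ ∈ range L, (ℓ : ℝ) * ρ ℓ : ℝ) : ℂ) := by push_cast; ring
        rw [h1, h2, mul_one, sub_div, div_self hN]
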